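/- Let σ > 0, and let z = x + ip, w = y + iq with x − y > 0. Then |1/sin(−πσ(x − y + i(p − q)))| ≤ 2 e^{−πσ|p−q|} / |sin(2πσ(x − y))|. Consequently, if moreover x − y ∈ [u, 2U] with 0 < u < U and 2U ≤ σ^{−1}/5, then this quantity is at most e^{−πσ|p−q|}/(σ u), and ∑_{k∈ℤ} |1/sin(−πσ(x − y + i(p + 2πk − q)))| ≤ (2/(σu)) ∑_{k≥0} e^{−2kπ²σ}, which is finite. -/

import Mathlib

open Real


lemma aux_abs_sin (A B : ℝ) :
    ‖Complex.sin ((A : ℂ) + (B : ℂ) * Complex.I)‖ =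
      Real.sqrt ((Real.sin A * Real.cosh B) ^ 2 + (Real.cos A * Real.sinh B) ^ 2) := by
  have h : Complex.sin ((A : ℂ) + (B : ℂ) * Complex.I) =
      ((Real.sin A * Real.cosh B : ℝ) : ℂ) + ((Real.cos A * Real.sinh B : ℝ) : ℂ) * Complex.I := by
    rw [Complex.sin_add, Complex.sin_mul_I, Complex.cos_mul_I]
    push_cast
    ring
  rw [h, Complex.norm_add_mul_I]

lemma aux_sinh_abs (x : ℝ) : Real.sinh |x| = |Real.sinh x| := by
  rcases le_or_gt 0 x with h | h
  · rw [abs_of_nonneg h, abs_of_nonneg (Real.sinh_nonneg_iff.2 h)]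
  · rw [abs_of_neg h, Real.sinh_neg, abs_of_neg (by simpa using Real.sinh_neg_iff.mpr h)]

lemma aux_key (A B : ℝ) :
    |Real.sin A * Real.cos A| * Real.exp |B| ≤
      Real.sqrt ((Real.sin A * Real.cosh B) ^ 2 + (Real.cos A * Real.sinh B) ^ 2) := by
  rw [Real.le_sqrt (by positivity) (by positivity)]
  have h1 : Real.sin A ^ 2 + Real.cos A ^ 2 = 1 := Real.sin_sq_add_cos_sq A
  have h3 : Real.exp |B| = Real.cosh B + |Real.sinh B| := by
    rw [← Real.cosh_abs B, ← aux_sinh_abs, Real.cosh_add_sinh]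
  rw [h3, mul_pow, sq_abs]
  have ht2 : Real.sinh B ^ 2 = |Real.sinh B| ^ 2 := (sq_abs _).symm
  have key : (Real.sin A * Real.cosh B) ^ 2 + (Real.cos A * Real.sinh B) ^ 2 -
      (Real.sin A * Real.cos A) ^ 2 * (Real.cosh B + |Real.sinh B|) ^ 2 =
      (Real.sin A ^ 2 * Real.cosh B - Real.cos A ^ 2 * |Real.sinh B|) ^ 2 := by
    rw [mul_pow (Real.cos A), ht2]
    linear_combination (-(Real.sin A ^ 2 * Real.cosh B ^ 2 + Real.cos A ^ 2 * |Real.sinh B| ^ 2)) * h1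
  nlinarith [sq_nonneg (Real.sin A ^ 2 * Real.cosh B - Real.cos A ^ 2 * |Real.sinh B|)]

lemma aux_main (σ d b : ℝ) (hσ : 0 < σ) :
    |Real.sin (2 * Real.pi * σ * d)| *
      ‖1 / Complex.sin (((-(Real.pi * σ) : ℝ) : ℂ) *
        ((d : ℂ) + (b : ℂ) * Complex.I))‖
      ≤ 2 * Real.exp (-(Real.pi * σ * |b|)) := by
  set A : ℝ := -(Real.pi * σ * d) with hA
  set B : ℝ := -(Real.pi * σ * b) with hB
  have hz : ((-(Real.pi * σ) : ℝ) : ℂ) * ((d : ℂ) + (b : ℂ) * Complex.I) =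
      ((A : ℝ) : ℂ) + ((B : ℝ) : ℂ) * Complex.I := by
    rw [hA, hB]; push_cast; ring
  have habs : ‖Complex.sin (((-(Real.pi * σ) : ℝ) : ℂ) *
      ((d : ℂ) + (b : ℂ) * Complex.I))‖ =
      Real.sqrt ((Real.sin A * Real.cosh B) ^ 2 + (Real.cos A * Real.sinh B) ^ 2) := by
    rw [hz, aux_abs_sin]
  have hs2 : |Real.sin (2 * Real.pi * σ * d)| = 2 * |Real.sin A * Real.cos A| := by
    have : Real.sin (2 * Real.pi * σ * d) = -Real.sin (2 * A) := by
      rw [show (2 : ℝ) * A = -(2 * Real.pi * σ * d) by rw [hA]; ring, Real.sin_neg, neg_neg]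
    rw [this, abs_neg, Real.sin_two_mul]
    rw [show (2:ℝ) * Real.sin A * Real.cos A = 2 * (Real.sin A * Real.cos A) by ring,
      abs_mul, abs_two]
  have hBabs : |B| = Real.pi * σ * |b| := by
    rw [hB, abs_neg, abs_mul, abs_of_nonneg (by positivity : (0:ℝ) ≤ Real.pi * σ)]
  rw [norm_div, norm_one, habs, hs2, ← hBabs]
  set R := Real.sqrt ((Real.sin A * Real.cosh B) ^ 2 + (Real.cos A * Real.sinh B) ^ 2) with hR
  have hR0 : 0 ≤ R := Real.sqrt_nonneg _
  rcases hR0.eq_or_lt with h0 | h0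
  · rw [← h0, div_zero, mul_zero]
    positivity
  · have hk : |Real.sin A * Real.cos A| * Real.exp |B| ≤ R := aux_key A B
    rw [mul_one_div, div_le_iff₀ h0, Real.exp_neg]
    have he : (0:ℝ) < Real.exp |B| := Real.exp_pos _
    calc 2 * |Real.sin A * Real.cos A|
        = 2 * (Real.exp |B|)⁻¹ * (|Real.sin A * Real.cos A| * Real.exp |B|) := by
          field_simp
      _ ≤ 2 * (Real.exp |B|)⁻¹ * R := by
          apply mul_le_mul_of_nonneg_left hk (by positivity)

lemma aux_bound2 (σ d u b : ℝ) (hσ : 0 < σ) (hu : 0 < u) (hd1 : u ≤ d)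
    (hd2 : 2 * Real.pi * σ * d ≤ Real.pi / 2) :
    ‖1 / Complex.sin (((-(Real.pi * σ) : ℝ) : ℂ) *
        ((d : ℂ) + (b : ℂ) * Complex.I))‖
      ≤ Real.exp (-(Real.pi * σ * |b|)) / (σ * u) := by
  have hd0 : 0 < d := lt_of_lt_of_le hu hd1
  have hx0 : (0:ℝ) ≤ 2 * Real.pi * σ * d := by positivity
  have hsin : 2 * σ * u ≤ Real.sin (2 * Real.pi * σ * d) := by
    have := Real.mul_le_sin hx0 hd2
    have hπ : 0 < Real.pi := Real.pi_pos
    have h4 : 2 / Real.pi * (2 * Real.pi * σ * d) = 4 * σ * d := by field_simp; ring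
    nlinarith
  have hsin' : 2 * σ * u ≤ |Real.sin (2 * Real.pi * σ * d)| :=
    le_trans hsin (le_abs_self _)
  have h1 := aux_main σ d b hσ
  set F := ‖1 / Complex.sin (((-(Real.pi * σ) : ℝ) : ℂ) *
        ((d : ℂ) + (b : ℂ) * Complex.I))‖ with hF
  have hF0 : 0 ≤ F := norm_nonneg _
  have h2 : 2 * σ * u * F ≤ 2 * Real.exp (-(Real.pi * σ * |b|)) :=
    le_trans (mul_le_mul_of_nonneg_right hsin' hF0) h1
  rw [le_div_iff₀ (by positivity : (0:ℝ) < σ * u)]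
  nlinarith


-- bound for shifted exponentials
lemma aux_g (σ c : ℝ) (hσ : 0 < σ) (hc0 : 0 ≤ c) (hc2 : c < 2 * Real.pi) (j : ℤ) :
    Real.exp (-(Real.pi * σ * |c + 2 * Real.pi * j|)) ≤
      (if 0 ≤ j then Real.exp (-(2 * Real.pi ^ 2 * σ * j)) else
        Real.exp (-(2 * Real.pi ^ 2 * σ * (-j - 1)))) := by
  have hπ := Real.pi_pos
  split_ifs with h
  · apply Real.exp_le_exp.2
    have hj : (0:ℝ) ≤ (j:ℝ) := by exact_mod_cast h
    have : 2 * Real.pi * j ≤ |c + 2 * Real.pi * j| := by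
      rw [abs_of_nonneg (by nlinarith)]; nlinarith
    nlinarith [mul_le_mul_of_nonneg_left this (by positivity : (0:ℝ) ≤ Real.pi * σ)]
  · push_neg at h
    have hj : (j:ℝ) ≤ -1 := by exact_mod_cast Int.le_sub_one_of_lt h
    apply Real.exp_le_exp.2
    have hneg : c + 2 * Real.pi * j ≤ 0 := by nlinarith
    have : 2 * Real.pi * (-(j:ℝ) - 1) ≤ |c + 2 * Real.pi * j| := by
      rw [abs_of_nonpos hneg]; nlinarith
    nlinarith [mul_le_mul_of_nonneg_left this (by positivity : (0:ℝ) ≤ Real.pi * σ)]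


noncomputable def auxg (σ : ℝ) : ℤ → ℝ := fun j =>
  if 0 ≤ j then Real.exp (-(2 * Real.pi ^ 2 * σ * j))
  else Real.exp (-(2 * Real.pi ^ 2 * σ * (-j - 1)))

lemma auxg_nat (σ : ℝ) (n : ℕ) : auxg σ n = Real.exp (-(2 * Real.pi ^ 2 * σ)) ^ n := by
  rw [auxg, if_pos (Int.natCast_nonneg n), ← Real.exp_nat_mul]
  push_cast; ring_nf

lemma auxg_neg (σ : ℝ) (n : ℕ) : auxg σ (-((n : ℤ) + 1)) = Real.exp (-(2 * Real.pi ^ 2 * σ)) ^ n := by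
  rw [auxg, if_neg (by omega), ← Real.exp_nat_mul]
  push_cast; ring_nf

lemma auxg_summable_nat (σ : ℝ) (hσ : 0 < σ) :
    Summable (fun n : ℕ => Real.exp (-(2 * Real.pi ^ 2 * σ)) ^ n) :=
  summable_geometric_of_lt_one (Real.exp_nonneg _)
    (Real.exp_lt_one_iff.2 (neg_lt_zero.mpr (by positivity)))

lemma auxg_summable (σ : ℝ) (hσ : 0 < σ) : Summable (auxg σ) := by
  apply Summable.of_nat_of_neg_add_one
  · exact (summable_congr fun n => auxg_nat σ n).2 (auxg_summable_nat σ hσ)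
  · exact (summable_congr fun n => auxg_neg σ n).2 (auxg_summable_nat σ hσ)

lemma auxg_tsum (σ : ℝ) (hσ : 0 < σ) :
    ∑' j : ℤ, auxg σ j = 2 * ∑' k : ℕ, Real.exp (-(2 * (k : ℝ) * Real.pi ^ 2 * σ)) := by
  have hT : ∀ n : ℕ, Real.exp (-(2 * Real.pi ^ 2 * σ)) ^ n
      = Real.exp (-(2 * (n : ℝ) * Real.pi ^ 2 * σ)) := by
    intro n; rw [← Real.exp_nat_mul]; ring_nf
  rw [tsum_of_nat_of_neg_add_one
    ((summable_congr fun n => auxg_nat σ n).2 (auxg_summable_nat σ hσ))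
    ((summable_congr fun n => auxg_neg σ n).2 (auxg_summable_nat σ hσ))]
  rw [tsum_congr (fun n => (auxg_nat σ n).trans (hT n)),
    tsum_congr (fun n => (auxg_neg σ n).trans (hT n))]
  ring


set_option maxHeartbeats 1000000 in
lemma aux_final (σ d u : ℝ) (b : ℤ → ℝ) (hσ : 0 < σ) (hu : 0 < u) (hd1 : u ≤ d)
    (hhalf : 2 * Real.pi * σ * d ≤ Real.pi / 2)
    (c : ℝ) (k0 : ℤ) (hc0 : 0 ≤ c) (hc2 : c < 2 * Real.pi)
    (hb : ∀ k : ℤ, b k = c + 2 * Real.pi * ((k - k0 : ℤ) : ℝ)) :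
    Summable (fun k : ℤ => ‖1 / Complex.sin (((-(Real.pi * σ) : ℝ) : ℂ) *
        ((d : ℂ) + ((b k : ℝ) : ℂ) * Complex.I))‖) ∧
    ∑' k : ℤ, ‖1 / Complex.sin (((-(Real.pi * σ) : ℝ) : ℂ) *
        ((d : ℂ) + ((b k : ℝ) : ℂ) * Complex.I))‖
      ≤ (2 / (σ * u)) * ∑' k : ℕ, Real.exp (-(2 * (k : ℝ) * Real.pi ^ 2 * σ)) := by
  have hle : ∀ k : ℤ,
      ‖1 / Complex.sin (((-(Real.pi * σ) : ℝ) : ℂ) *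
        ((d : ℂ) + ((b k : ℝ) : ℂ) * Complex.I))‖
      ≤ (σ * u)⁻¹ * auxg σ (k - k0) := by
    intro k
    refine le_trans (aux_bound2 σ d u (b k) hσ hu hd1 hhalf) ?_
    rw [div_eq_inv_mul]
    apply mul_le_mul_of_nonneg_left _ (by positivity)
    rw [hb k]
    exact aux_g σ c hσ hc0 hc2 (k - k0)
  have hGsum : Summable (fun k : ℤ => (σ * u)⁻¹ * auxg σ (k - k0)) := by
    apply Summable.mul_left
    exact (auxg_summable σ hσ).comp_injective (fun a b hab => by omega)
  have hfsum : Summable (fun k : ℤ =>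
      ‖1 / Complex.sin (((-(Real.pi * σ) : ℝ) : ℂ) *
        ((d : ℂ) + ((b k : ℝ) : ℂ) * Complex.I))‖) :=
    Summable.of_nonneg_of_le (fun k => norm_nonneg _) hle hGsum
  refine ⟨hfsum, ?_⟩
  refine le_trans (Summable.tsum_le_tsum hle hfsum hGsum) ?_
  rw [tsum_mul_left]
  have hshift : ∑' k : ℤ, auxg σ (k - k0) = ∑' j : ℤ, auxg σ j := by
    refine tsum_eq_tsum_of_ne_zero_bij (fun j => j.1 + k0) ?_ ?_ ?_
    · intro a b hab
      exact Subtype.ext (by simpa using hab)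
    · intro k hk
      exact ⟨⟨k - k0, hk⟩, by simp⟩
    · intro j
      simp
  rw [hshift, auxg_tsum σ hσ]
  exact le_of_eq (by ring)


theorem stmt_14 (σ x y p q u U : ℝ) (hσ : 0 < σ) (hxy : 0 < x - y) :
    |Real.sin (2 * Real.pi * σ * (x - y))| *
        ‖1 / Complex.sin (((-(Real.pi * σ) : ℝ) : ℂ) *
          (((x - y : ℝ) : ℂ) + ((p - q : ℝ) : ℂ) * Complex.I))‖
      ≤ 2 * Real.exp (-(Real.pi * σ * |p - q|)) ∧
    (0 < u → u < U → 2 * U ≤ σ⁻¹ / 5 → x - y ∈ Set.Icc u (2 * U) →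
      ‖1 / Complex.sin (((-(Real.pi * σ) : ℝ) : ℂ) *
          (((x - y : ℝ) : ℂ) + ((p - q : ℝ) : ℂ) * Complex.I))‖
        ≤ Real.exp (-(Real.pi * σ * |p - q|)) / (σ * u) ∧
      Summable (fun k : ℤ => ‖1 / Complex.sin (((-(Real.pi * σ) : ℝ) : ℂ) *
          (((x - y : ℝ) : ℂ) + ((p + 2 * Real.pi * (k : ℝ) - q : ℝ) : ℂ) * Complex.I))‖) ∧
      ∑' k : ℤ, ‖1 / Complex.sin (((-(Real.pi * σ) : ℝ) : ℂ) *
          (((x - y : ℝ) : ℂ) + ((p + 2 * Real.pi * (k : ℝ) - q : ℝ) : ℂ) * Complex.I))‖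
        ≤ (2 / (σ * u)) * ∑' k : ℕ, Real.exp (-(2 * (k : ℝ) * Real.pi ^ 2 * σ))) := by
  have hπ := Real.pi_pos
  refine ⟨aux_main σ (x - y) (p - q) hσ, fun hu huU hU hd => ?_⟩
  obtain ⟨hd1, hd2⟩ := hd
  have hσinv : σ * σ⁻¹ = 1 := mul_inv_cancel₀ hσ.ne'
  have hhalf : 2 * Real.pi * σ * (x - y) ≤ Real.pi / 2 := by
    have h1 : x - y ≤ σ⁻¹ / 5 := le_trans hd2 hU
    have h2 : 2 * Real.pi * σ * (x - y) ≤ 2 * Real.pi * σ * (σ⁻¹ / 5) := by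
      apply mul_le_mul_of_nonneg_left h1 (by positivity)
    have h3 : 2 * Real.pi * σ * (σ⁻¹ / 5) = 2 * Real.pi / 5 := by
      field_simp
    nlinarith
  have h2π : (0:ℝ) < 2 * Real.pi := by positivity
  have hfl : (⌊(p - q) / (2 * Real.pi)⌋ : ℝ) * (2 * Real.pi) ≤ p - q := by
    have h := Int.floor_le ((p - q) / (2 * Real.pi))
    rw [le_div_iff₀ h2π] at h
    exact h
  have hfl2 : p - q < ((⌊(p - q) / (2 * Real.pi)⌋ : ℝ) + 1) * (2 * Real.pi) := by
    have h := Int.lt_floor_add_one ((p - q) / (2 * Real.pi))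
    rw [div_lt_iff₀ h2π] at h
    exact h
  set k0 : ℤ := -⌊(p - q) / (2 * Real.pi)⌋ with hk0
  have hc0 : 0 ≤ (p - q) + 2 * Real.pi * (k0 : ℝ) := by
    rw [hk0]; push_cast; nlinarith
  have hc2 : (p - q) + 2 * Real.pi * (k0 : ℝ) < 2 * Real.pi := by
    rw [hk0]; push_cast; nlinarith
  have hb : ∀ k : ℤ, (fun k : ℤ => p + 2 * Real.pi * (k : ℝ) - q) k =
      ((p - q) + 2 * Real.pi * (k0 : ℝ)) + 2 * Real.pi * ((k - k0 : ℤ) : ℝ) := by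
    intro k; push_cast; ring
  have key := aux_final σ (x - y) u (fun k : ℤ => p + 2 * Real.pi * (k : ℝ) - q) hσ hu hd1
    hhalf ((p - q) + 2 * Real.pi * (k0 : ℝ)) k0 hc0 hc2 hb
  exact ⟨aux_bound2 σ (x - y) u (p - q) hσ hu hd1 hhalf, key.1, key.2⟩
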